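/- Every tree T in the family 𝒯(3) has a fractional [1, 3/2]-factor taking values in {1/2, 1}, where every pendant edge receives value 1 and every other edge receives value 1/2. -/

import Mathlib

open SimpleGraph

/-- The `h`-degree of a vertex `v`: the sum of `h` over the edges incident with `v`. -/
noncomputable def hdeg {V : Type*} (G : SimpleGraph V) (h : Sym2 V → ℚ) (v : V) : ℚ :=
  ∑ᶠ e ∈ G.incidenceSet v, h e

/-- `h` is a fractional `[a,b]`-factor of `G`: a function on edges with values in `[0,1]`
(vanishing off the edge set) whose `h`-degree lies in `[a,b]` at every vertex. -/
def IsFracFactor {V : Type*} (G : SimpleGraph V) (a b : ℚ) (h : Sym2 V → ℚ) : Prop :=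
  (∀ e, h e ≠ 0 → e ∈ G.edgeSet) ∧ (∀ e, 0 ≤ h e ∧ h e ≤ 1) ∧
    ∀ v : V, a ≤ hdeg G h v ∧ hdeg G h v ≤ b

/-- Degree of a vertex, as the `ncard` of its neighbor set. -/
noncomputable def ndeg {V : Type*} (G : SimpleGraph V) (v : V) : ℕ :=
  (G.neighborSet v).ncard

/-- Vertex set of the tree `T_R` obtained from a `{1,3}`-tree `R`: the vertices of `R`,
one subdivision vertex for each edge of `R`, and one new pendant vertex for each leaf of `R`. -/
def T3Vert {V : Type*} (R : SimpleGraph V) : Type _ :=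
  V ⊕ (↥R.edgeSet ⊕ {v : V // ndeg R v = 1})

/-- The tree `T_R` obtained from `R` by subdividing every edge once and attaching a new
pendant edge (with a new endpoint) at every leaf of `R`. -/
def T3 {V : Type*} (R : SimpleGraph V) : SimpleGraph (T3Vert R) :=
  SimpleGraph.fromRel (fun a b =>
    match a, b with
    | Sum.inl v, Sum.inr (Sum.inl e) => v ∈ (e : Sym2 V)
    | Sum.inl v, Sum.inr (Sum.inr w) => v = (w : V)
    | _, _ => False)

attribute [reducible] T3Vert

namespace T3Aux

variable {m : ℕ} {R : SimpleGraph (Fin m)}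

instance : Finite (T3Vert R) := by unfold T3Vert; infer_instance

open Classical in
noncomputable def hfun (R : SimpleGraph (Fin m)) : Sym2 (T3Vert R) → ℚ :=
  fun e =>
    if ∃ w : {v : Fin m // ndeg R v = 1},
        e = s(Sum.inl (w : Fin m), Sum.inr (Sum.inr w)) then 1
    else if ∃ (v : Fin m) (f : R.edgeSet), v ∈ (f : Sym2 (Fin m)) ∧
        e = s(Sum.inl v, Sum.inr (Sum.inl f)) then 1/2
    else 0

lemma hfun_pend (w : {v : Fin m // ndeg R v = 1}) :
    hfun R s(Sum.inl (w : Fin m), Sum.inr (Sum.inr w)) = 1 := by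
  rw [hfun, if_pos ⟨w, rfl⟩]

lemma hfun_sub {v : Fin m} {f : R.edgeSet} (hv : v ∈ (f : Sym2 (Fin m))) :
    hfun R s(Sum.inl v, Sum.inr (Sum.inl f)) = 1/2 := by
  rw [hfun, if_neg, if_pos ⟨v, f, hv, rfl⟩]
  rintro ⟨w, hw⟩
  rw [Sym2.eq_iff] at hw
  rcases hw with ⟨-, h⟩ | ⟨h, -⟩
  · injection h with h'; exact nomatch h'
  · exact nomatch h

lemma adj_sub {v : Fin m} {f : R.edgeSet} (hv : v ∈ (f : Sym2 (Fin m))) :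
    (T3 R).Adj (Sum.inl v) (Sum.inr (Sum.inl f)) := by
  rw [T3, fromRel_adj]
  exact ⟨by simp, Or.inl hv⟩

lemma adj_pend (w : {v : Fin m // ndeg R v = 1}) :
    (T3 R).Adj (Sum.inl (w : Fin m)) (Sum.inr (Sum.inr w)) := by
  rw [T3, fromRel_adj]
  exact ⟨by simp, Or.inl rfl⟩

lemma mem_edgeSet_iff {e : Sym2 (T3Vert R)} :
    e ∈ (T3 R).edgeSet ↔
      (∃ (v : Fin m) (f : R.edgeSet), v ∈ (f : Sym2 (Fin m)) ∧
        e = s(Sum.inl v, Sum.inr (Sum.inl f))) ∨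
      (∃ w : {v : Fin m // ndeg R v = 1},
        e = s(Sum.inl (w : Fin m), Sum.inr (Sum.inr w))) := by
  induction e using Sym2.ind with
  | _ a b =>
    constructor
    · intro hab
      rw [SimpleGraph.mem_edgeSet, T3, fromRel_adj] at hab
      obtain ⟨-, hab | hab⟩ := hab
      · rcases a with v | f | w <;> rcases b with v' | f' | w' <;> simp at hab
        · exact Or.inl ⟨v, f', hab, rfl⟩
        · exact Or.inr ⟨w', by rw [hab]⟩

      · rcases a with v | f | w <;> rcases b with v' | f' | w' <;> simp at hab
        · exact Or.inl ⟨v', f, hab, by rw [Sym2.eq_swap]⟩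
        · exact Or.inr ⟨w, by rw [hab, Sym2.eq_swap]⟩
    · rintro (⟨v, f, hv, he⟩ | ⟨w, he⟩)
      · rw [he]; exact (SimpleGraph.mem_edgeSet _).mpr (adj_sub hv)
      · rw [he]; exact (SimpleGraph.mem_edgeSet _).mpr (adj_pend w)

lemma mem_incidenceSet_iff {x : T3Vert R} {e : Sym2 (T3Vert R)} :
    e ∈ (T3 R).incidenceSet x ↔ e ∈ (T3 R).edgeSet ∧ x ∈ e := Iff.rfl

lemma incidence_pendVert (w : {v : Fin m // ndeg R v = 1}) :
    (T3 R).incidenceSet (Sum.inr (Sum.inr w)) =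
      {(s(Sum.inl (w : Fin m), Sum.inr (Sum.inr w)) : Sym2 (T3Vert R))} := by
  ext e
  rw [mem_incidenceSet_iff, mem_edgeSet_iff, Set.mem_singleton_iff]
  constructor
  · rintro ⟨(⟨v, f, hv, rfl⟩ | ⟨w', rfl⟩), hx⟩
    · rw [Sym2.mem_iff] at hx
      rcases hx with h | h
      · exact absurd h (by exact fun h => nomatch h)
      · injection h with h'; exact absurd h' (by exact fun h => nomatch h)
    · rw [Sym2.mem_iff] at hx
      rcases hx with h | h
      · exact absurd h (by exact fun h => nomatch h)
      · injection h with h'; injection h' with h''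
        subst h''; rfl
  · rintro rfl
    exact ⟨Or.inr ⟨w, rfl⟩, by rw [Sym2.mem_iff]; right; rfl⟩

lemma inl_pair_inj {a b : Fin m} {x y : ↥R.edgeSet ⊕ {v : Fin m // ndeg R v = 1}} :
    s(Sum.inl a, Sum.inr x) = (s(Sum.inl b, Sum.inr y) : Sym2 (T3Vert R)) ↔ a = b ∧ x = y := by
  rw [Sym2.eq_iff]
  constructor
  · rintro (⟨h1, h2⟩ | ⟨h1, h2⟩)
    · injection h1 with h1'; injection h2 with h2'; exact ⟨h1', h2'⟩
    · exact absurd h1 (fun h => nomatch h)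
  · rintro ⟨rfl, rfl⟩; left; exact ⟨rfl, rfl⟩

lemma incidence_subVert {f : R.edgeSet} {a b : Fin m}
    (hf : (f : Sym2 (Fin m)) = s(a, b)) :
    (T3 R).incidenceSet (Sum.inr (Sum.inl f)) =
      {(s(Sum.inl a, Sum.inr (Sum.inl f)) : Sym2 (T3Vert R)),
       (s(Sum.inl b, Sum.inr (Sum.inl f)) : Sym2 (T3Vert R))} := by
  ext e
  rw [mem_incidenceSet_iff, mem_edgeSet_iff]
  constructor
  · rintro ⟨(⟨v, f', hv, rfl⟩ | ⟨w', rfl⟩), hx⟩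
    · rw [Sym2.mem_iff] at hx
      rcases hx with h | h
      · exact absurd h (fun h => nomatch h)
      · injection h with h'; injection h' with h''
        subst h''
        rw [hf, Sym2.mem_iff] at hv
        rcases hv with rfl | rfl
        · left; rfl
        · right; rfl
    · rw [Sym2.mem_iff] at hx
      rcases hx with h | h
      · exact absurd h (fun h => nomatch h)
      · injection h with h'
        exact absurd h' (fun h => nomatch h)
  · rintro (rfl | rfl)
    · exact ⟨Or.inl ⟨a, f, by rw [hf, Sym2.mem_iff]; left; rfl, rfl⟩,
        by rw [Sym2.mem_iff]; right; rfl⟩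
    · exact ⟨Or.inl ⟨b, f, by rw [hf, Sym2.mem_iff]; right; rfl, rfl⟩,
        by rw [Sym2.mem_iff]; right; rfl⟩

lemma hdeg_pendVert (w : {v : Fin m // ndeg R v = 1}) :
    hdeg (T3 R) (hfun R) (Sum.inr (Sum.inr w)) = 1 := by
  rw [hdeg, incidence_pendVert, finsum_mem_singleton, hfun_pend]

lemma hdeg_subVert (f : R.edgeSet) :
    hdeg (T3 R) (hfun R) (Sum.inr (Sum.inl f)) = 1 := by
  obtain ⟨⟨a, b⟩, hab⟩ := (f : Sym2 (Fin m)).exists_rep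
  have hf : (f : Sym2 (Fin m)) = s(a, b) := hab.symm
  have hadj : R.Adj a b := (R.mem_edgeSet).mp (by rw [← hf]; exact f.2)
  have hne : (s(Sum.inl a, Sum.inr (Sum.inl f)) : Sym2 (T3Vert R)) ≠
      s(Sum.inl b, Sum.inr (Sum.inl f)) := by
    intro h
    exact hadj.ne (inl_pair_inj.mp h).1
  rw [hdeg, incidence_subVert hf, finsum_mem_pair hne,
    hfun_sub (by rw [hf, Sym2.mem_iff]; left; rfl),
    hfun_sub (by rw [hf, Sym2.mem_iff]; right; rfl)]
  norm_num

lemma hdeg_leaf (u : Fin m) (hu : ndeg R u = 1) :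
    hdeg (T3 R) (hfun R) (Sum.inl u) = 3/2 := by
  obtain ⟨a, hN⟩ := Set.ncard_eq_one.mp hu
  have ha : R.Adj u a := by
    have : a ∈ R.neighborSet u := by rw [hN]; rfl
    exact this
  set F : R.edgeSet := ⟨s(u, a), (R.mem_edgeSet).mpr ha⟩ with hF
  set W : {v : Fin m // ndeg R v = 1} := ⟨u, hu⟩ with hW
  have hkey : (T3 R).incidenceSet (Sum.inl u) =
      {(s(Sum.inl u, Sum.inr (Sum.inl F)) : Sym2 (T3Vert R)),
       (s(Sum.inl u, Sum.inr (Sum.inr W)) : Sym2 (T3Vert R))} := by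
    ext e
    rw [mem_incidenceSet_iff, mem_edgeSet_iff]
    constructor
    · rintro ⟨(⟨v, f, hv, rfl⟩ | ⟨w', rfl⟩), hx⟩
      · rw [Sym2.mem_iff] at hx
        rcases hx with h | h
        · injection h with h'
          subst h'
          obtain ⟨c, hc⟩ := Sym2.mem_iff_exists.mp hv
          have hadj : R.Adj u c := (R.mem_edgeSet).mp (by rw [← hc]; exact f.2)
          have : c ∈ R.neighborSet u := hadj
          rw [hN, Set.mem_singleton_iff] at this
          subst this
          have : f = F := Subtype.ext (by rw [hc, hF])
          subst this
          left; rfl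
        · exact absurd h (fun h => nomatch h)
      · rw [Sym2.mem_iff] at hx
        rcases hx with h | h
        · injection h with h'
          have : w' = W := Subtype.ext h'.symm
          subst this
          right; rfl
        · exact absurd h (fun h => nomatch h)
    · rintro (rfl | rfl)
      · exact ⟨Or.inl ⟨u, F, by rw [hF]; exact (by rw [Sym2.mem_iff]; left; rfl), rfl⟩,
          by rw [Sym2.mem_iff]; left; rfl⟩
      · exact ⟨Or.inr ⟨W, rfl⟩, by rw [Sym2.mem_iff]; left; rfl⟩
  have hne : (s(Sum.inl u, Sum.inr (Sum.inl F)) : Sym2 (T3Vert R)) ≠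
      s(Sum.inl u, Sum.inr (Sum.inr W)) := by
    intro h
    exact nomatch (inl_pair_inj.mp h).2
  have h2 : hfun R s(Sum.inl u, Sum.inr (Sum.inr W)) = 1 := hfun_pend W
  rw [hdeg, hkey, finsum_mem_pair hne,
    hfun_sub (show u ∈ (F : Sym2 (Fin m)) by rw [hF]; rw [Sym2.mem_iff]; left; rfl), h2]
  norm_num

lemma hdeg_deg3 (u : Fin m) (hu : ndeg R u = 3) :
    hdeg (T3 R) (hfun R) (Sum.inl u) = 3/2 := by
  classical
  obtain ⟨a, b, c, hab, hac, hbc, hN⟩ := Set.ncard_eq_three.mp hu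
  have hmem : ∀ x ∈ ({a, b, c} : Set (Fin m)), R.Adj u x := by
    intro x hx
    have : x ∈ R.neighborSet u := by rw [hN]; exact hx
    exact this
  have ha : R.Adj u a := hmem a (by left; rfl)
  have hb : R.Adj u b := hmem b (by right; left; rfl)
  have hc : R.Adj u c := hmem c (by right; right; rfl)
  set Fa : R.edgeSet := ⟨s(u, a), (R.mem_edgeSet).mpr ha⟩ with hFa
  set Fb : R.edgeSet := ⟨s(u, b), (R.mem_edgeSet).mpr hb⟩ with hFb
  set Fc : R.edgeSet := ⟨s(u, c), (R.mem_edgeSet).mpr hc⟩ with hFc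
  have edge_ne : ∀ (x y : Fin m) (hx : R.Adj u x) (hy : R.Adj u y), x ≠ y →
      (⟨s(u, x), (R.mem_edgeSet).mpr hx⟩ : R.edgeSet) ≠ ⟨s(u, y), (R.mem_edgeSet).mpr hy⟩ := by
    intro x y hx hy hxy h
    have h' : s(u, x) = s(u, y) := congrArg Subtype.val h
    rw [Sym2.eq_iff] at h'
    rcases h' with ⟨-, h'⟩ | ⟨h1, h2⟩
    · exact hxy h'
    · exact hy.ne h1
  set Ea := (s(Sum.inl u, Sum.inr (Sum.inl Fa)) : Sym2 (T3Vert R)) with hEa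
  set Eb := (s(Sum.inl u, Sum.inr (Sum.inl Fb)) : Sym2 (T3Vert R)) with hEb
  set Ec := (s(Sum.inl u, Sum.inr (Sum.inl Fc)) : Sym2 (T3Vert R)) with hEc
  have hEab : Ea ≠ Eb := fun h =>
    edge_ne a b ha hb hab (Sum.inl.inj (inl_pair_inj.mp h).2)
  have hEac : Ea ≠ Ec := fun h =>
    edge_ne a c ha hc hac (Sum.inl.inj (inl_pair_inj.mp h).2)
  have hEbc : Eb ≠ Ec := fun h =>
    edge_ne b c hb hc hbc (Sum.inl.inj (inl_pair_inj.mp h).2)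
  have hkey : (T3 R).incidenceSet (Sum.inl u) = {Ea, Eb, Ec} := by
    ext e
    rw [mem_incidenceSet_iff, mem_edgeSet_iff]
    constructor
    · rintro ⟨(⟨v, f, hv, rfl⟩ | ⟨w', rfl⟩), hx⟩
      · rw [Sym2.mem_iff] at hx
        rcases hx with h | h
        · injection h with h'
          subst h'
          obtain ⟨d, hd⟩ := Sym2.mem_iff_exists.mp hv
          have hadj : R.Adj u d := (R.mem_edgeSet).mp (by rw [← hd]; exact f.2)
          have hdm : d ∈ ({a, b, c} : Set (Fin m)) := by
            rw [← hN]; exact hadj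
          rcases hdm with rfl | rfl | rfl
          · left; rw [hEa]
            have hfa : f = Fa := Subtype.ext (by rw [hd, hFa])
            rw [hfa]
          · right; left; rw [hEb]
            have hfb : f = Fb := Subtype.ext (by rw [hd, hFb])
            rw [hfb]
          · right; right; rw [hEc]
            have hfc : f = Fc := Subtype.ext (by rw [hd, hFc])
            rw [hfc]; exact rfl
        · exact absurd h (fun h => nomatch h)
      · rw [Sym2.mem_iff] at hx
        rcases hx with h | h
        · injection h with h'
          exfalso
          have : ndeg R u = 1 := by rw [h']; exact w'.2
          omega
        · exact absurd h (fun h => nomatch h)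
    · rintro (rfl | rfl | rfl)
      · exact ⟨Or.inl ⟨u, Fa, by rw [hFa]; exact (by rw [Sym2.mem_iff]; left; rfl), rfl⟩,
          by rw [hEa, Sym2.mem_iff]; left; rfl⟩
      · exact ⟨Or.inl ⟨u, Fb, by rw [hFb]; exact (by rw [Sym2.mem_iff]; left; rfl), rfl⟩,
          by rw [hEb, Sym2.mem_iff]; left; rfl⟩
      · exact ⟨Or.inl ⟨u, Fc, by rw [hFc]; exact (by rw [Sym2.mem_iff]; left; rfl), rfl⟩,
          by rw [hEc, Sym2.mem_iff]; left; rfl⟩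
  have hcoe : ({Ea, Eb, Ec} : Set (Sym2 (T3Vert R))) =
      (↑({Ea, Eb, Ec} : Finset (Sym2 (T3Vert R))) : Set (Sym2 (T3Vert R))) := by simp
  rw [hdeg, hkey, hcoe, finsum_mem_coe_finset]
  rw [Finset.sum_insert (by simp [hEab, hEac]),
    Finset.sum_insert (by simp [hEbc]), Finset.sum_singleton]
  rw [hEa, hEb, hEc,
    hfun_sub (show u ∈ (Fa : Sym2 (Fin m)) by rw [hFa]; rw [Sym2.mem_iff]; left; rfl),
    hfun_sub (show u ∈ (Fb : Sym2 (Fin m)) by rw [hFb]; rw [Sym2.mem_iff]; left; rfl),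
    hfun_sub (show u ∈ (Fc : Sym2 (Fin m)) by rw [hFc]; rw [Sym2.mem_iff]; left; rfl)]
  norm_num

lemma nbr_pendVert (w : {v : Fin m // ndeg R v = 1}) :
    (T3 R).neighborSet (Sum.inr (Sum.inr w)) = {Sum.inl (w : Fin m)} := by
  ext x
  simp only [SimpleGraph.mem_neighborSet, Set.mem_singleton_iff]
  constructor
  · intro h
    rw [T3, fromRel_adj] at h
    obtain ⟨-, h | h⟩ := h
    · rcases x with v | f | w' <;> exact absurd h (fun h => h)
    · rcases x with v | f | w'
      · rw [show v = (w : Fin m) from h]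
      · exact absurd h (fun h => h)
      · exact absurd h (fun h => h)
  · rintro rfl
    exact (adj_pend w).symm

lemma ndeg_pendVert (w : {v : Fin m // ndeg R v = 1}) :
    ndeg (T3 R) (Sum.inr (Sum.inr w)) = 1 := by
  rw [ndeg, nbr_pendVert, Set.ncard_singleton]

lemma ndeg_ne_one_subVert (f : R.edgeSet) :
    ndeg (T3 R) (Sum.inr (Sum.inl f)) ≠ 1 := by
  obtain ⟨⟨a, b⟩, hab⟩ := (f : Sym2 (Fin m)).exists_rep
  have hf : (f : Sym2 (Fin m)) = s(a, b) := hab.symm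
  have hadj : R.Adj a b := (R.mem_edgeSet).mp (by rw [← hf]; exact f.2)
  have h1 : 1 < ndeg (T3 R) (Sum.inr (Sum.inl f)) := by
    rw [ndeg]
    refine (Set.one_lt_ncard (Set.toFinite _)).mpr
      ⟨Sum.inl a, ?_, Sum.inl b, ?_, fun h => hadj.ne (Sum.inl.inj h)⟩
    · exact (adj_sub (by rw [hf, Sym2.mem_iff]; left; rfl)).symm
    · exact (adj_sub (by rw [hf, Sym2.mem_iff]; right; rfl)).symm
  omega

lemma ndeg_ne_one_inl (u : Fin m) (hu : ndeg R u = 1 ∨ ndeg R u = 3) :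
    ndeg (T3 R) (Sum.inl u) ≠ 1 := by
  have h1 : 1 < ndeg (T3 R) (Sum.inl u) := by
    rw [ndeg]
    refine (Set.one_lt_ncard (Set.toFinite _)).mpr ?_
    rcases hu with hu | hu
    · obtain ⟨a, hN⟩ := Set.ncard_eq_one.mp hu
      have ha : R.Adj u a := by
        have : a ∈ R.neighborSet u := by rw [hN]; rfl
        exact this
      refine ⟨Sum.inr (Sum.inl ⟨s(u, a), (R.mem_edgeSet).mpr ha⟩), ?_,
        Sum.inr (Sum.inr ⟨u, hu⟩), ?_, ?_⟩
      · exact adj_sub (by rw [Sym2.mem_iff]; left; rfl)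
      · exact adj_pend ⟨u, hu⟩
      · intro h
        injection h with h'
        exact nomatch h'
    · obtain ⟨a, b, c, hab, -, -, hN⟩ := Set.ncard_eq_three.mp hu
      have ha : R.Adj u a := by
        have : a ∈ R.neighborSet u := by rw [hN]; left; rfl
        exact this
      have hb : R.Adj u b := by
        have : b ∈ R.neighborSet u := by rw [hN]; right; left; rfl
        exact this
      refine ⟨Sum.inr (Sum.inl ⟨s(u, a), (R.mem_edgeSet).mpr ha⟩), ?_,
        Sum.inr (Sum.inl ⟨s(u, b), (R.mem_edgeSet).mpr hb⟩), ?_, ?_⟩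
      · exact adj_sub (by rw [Sym2.mem_iff]; left; rfl)
      · exact adj_sub (by rw [Sym2.mem_iff]; left; rfl)
      · intro h
        injection h with h'
        injection h' with h''
        have h3 : s(u, a) = s(u, b) := congrArg Subtype.val h''
        rw [Sym2.eq_iff] at h3
        rcases h3 with ⟨-, h3⟩ | ⟨h3, h4⟩
        · exact hab h3
        · exact hb.ne h3
  omega

end T3Aux

/-- Every tree `T_R ∈ 𝒯(3)` has a fractional `[1, 3/2]`-factor with values in `{1/2, 1}`:
every pendant edge gets value `1` and every other edge gets value `1/2`. -/
theorem stmt13 (m : ℕ) (R : SimpleGraph (Fin m)) (hR : R.IsTree)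
    (hdegR : ∀ v, ndeg R v = 1 ∨ ndeg R v = 3) :
    ∃ h : Sym2 (T3Vert R) → ℚ, IsFracFactor (T3 R) 1 (3/2) h ∧
      ∀ e ∈ (T3 R).edgeSet,
        ((∃ v ∈ e, ndeg (T3 R) v = 1) → h e = 1) ∧
        ((¬ ∃ v ∈ e, ndeg (T3 R) v = 1) → h e = 1/2) := by
  refine ⟨T3Aux.hfun R, ⟨?_, ?_, ?_⟩, ?_⟩
  · intro e he
    rw [T3Aux.hfun] at he
    split_ifs at he with h1 h2
    · obtain ⟨w, rfl⟩ := h1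
      exact (SimpleGraph.mem_edgeSet _).mpr (T3Aux.adj_pend w)
    · obtain ⟨v, f, hv, rfl⟩ := h2
      exact (SimpleGraph.mem_edgeSet _).mpr (T3Aux.adj_sub hv)
    · exact absurd rfl he
  · intro e
    rw [T3Aux.hfun]
    split_ifs <;> norm_num
  · rintro (u | f | w)
    · rcases hdegR u with hu | hu
      · rw [T3Aux.hdeg_leaf u hu]; norm_num
      · rw [T3Aux.hdeg_deg3 u hu]; norm_num
    · rw [T3Aux.hdeg_subVert f]; norm_num
    · rw [T3Aux.hdeg_pendVert w]; norm_num
  · intro e he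
    rw [T3Aux.mem_edgeSet_iff] at he
    rcases he with ⟨v, f, hv, rfl⟩ | ⟨w, rfl⟩
    · constructor
      · rintro ⟨x, hx, hd⟩
        exfalso
        rw [Sym2.mem_iff] at hx
        rcases hx with rfl | rfl
        · exact T3Aux.ndeg_ne_one_inl v (hdegR v) hd
        · exact T3Aux.ndeg_ne_one_subVert f hd
      · intro _
        exact T3Aux.hfun_sub hv
    · constructor
      · intro _
        exact T3Aux.hfun_pend w
      · intro hne
        exact absurd ⟨Sum.inr (Sum.inr w), by rw [Sym2.mem_iff]; right; rfl,
          T3Aux.ndeg_pendVert w⟩ hne
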